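/- Fix n₀ > 0 and define for r > 0 the diagonal NTK entry K(r) = 1/4 + (1/(2π))·arcsin(r²/(r² + 2n₀)) + (1/(2π))·r²/√((2n₀ + r²)² − r⁴). Then lim_{r→∞} K(r)/r = 1/(4π√n₀). (This is the paper's claim that the diagonal entries of the trained kernel matrix K̃ grow like r/(4π√n₀) for large input radius r.) -/

import Mathlib

open Filter Real

lemma aux_ratio_tendsto (c : ℝ) (hc : 0 < c) :
    Tendsto (fun r : ℝ => r ^ 2 / (r ^ 2 + c)) atTop (nhds 1) := by
  have h1 : Tendsto (fun r : ℝ => r ^ 2 + c) atTop atTop :=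
    (tendsto_pow_atTop (two_ne_zero)).atTop_add tendsto_const_nhds
  have h2 : Tendsto (fun r : ℝ => c / (r ^ 2 + c)) atTop (nhds 0) :=
    Tendsto.div_atTop tendsto_const_nhds h1
  have h3 : Tendsto (fun r : ℝ => 1 - c / (r ^ 2 + c)) atTop (nhds (1 - 0)) :=
    tendsto_const_nhds.sub h2
  rw [sub_zero] at h3
  refine h3.congr' ?_
  filter_upwards [eventually_gt_atTop 0] with r hr
  have hpos : (0:ℝ) < r ^ 2 + c := by positivity
  field_simp
  ring

/-- the diagonal NTK entry
`K(r) = 1/4 + (1/(2π))·arcsin(r²/(r² + 2n₀)) + (1/(2π))·r²/√((2n₀ + r²)² − r⁴)`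
satisfies `K(r)/r → 1/(4π√n₀)` as `r → ∞`. -/
theorem diagonal_ntk_growth (n₀ : ℝ) (hn₀ : 0 < n₀) :
    Tendsto
      (fun r : ℝ =>
        (1 / 4 + (1 / (2 * π)) * arcsin (r ^ 2 / (r ^ 2 + 2 * n₀))
            + (1 / (2 * π)) * (r ^ 2 / Real.sqrt ((2 * n₀ + r ^ 2) ^ 2 - r ^ 4))) / r)
      atTop (nhds (1 / (4 * π * Real.sqrt n₀))) := by
  have hπ : (0:ℝ) < π := Real.pi_pos
  have hs : (0:ℝ) < Real.sqrt n₀ := Real.sqrt_pos.mpr hn₀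
  set c : ℝ := 1 / (4 * π * Real.sqrt n₀) with hc
  have hEq : ∀ᶠ r : ℝ in atTop,
      (1 / 4 + (1 / (2 * π)) * arcsin (r ^ 2 / (r ^ 2 + 2 * n₀))
          + (1 / (2 * π)) * (r ^ 2 / Real.sqrt ((2 * n₀ + r ^ 2) ^ 2 - r ^ 4))) / r
      = (1 / 4 + (1 / (2 * π)) * arcsin (r ^ 2 / (r ^ 2 + 2 * n₀))) / r
        + c * Real.sqrt (r ^ 2 / (r ^ 2 + n₀)) := by
    filter_upwards [eventually_gt_atTop 0] with r hr
    have hsum : (0:ℝ) < r ^ 2 + n₀ := by positivity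
    have h1 : (2 * n₀ + r ^ 2) ^ 2 - r ^ 4 = (2 * Real.sqrt n₀) ^ 2 * (r ^ 2 + n₀) := by
      have : Real.sqrt n₀ ^ 2 = n₀ := Real.sq_sqrt hn₀.le
      nlinarith [this]
    have h2 : Real.sqrt ((2 * n₀ + r ^ 2) ^ 2 - r ^ 4)
        = 2 * Real.sqrt n₀ * Real.sqrt (r ^ 2 + n₀) := by
      rw [h1, Real.sqrt_mul (by positivity), Real.sqrt_sq (by positivity)]
    have h3 : Real.sqrt (r ^ 2 / (r ^ 2 + n₀)) = r / Real.sqrt (r ^ 2 + n₀) := by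
      rw [Real.sqrt_div (by positivity), Real.sqrt_sq hr.le]
    have hss : (0:ℝ) < Real.sqrt (r ^ 2 + n₀) := Real.sqrt_pos.mpr hsum
    rw [h2, h3, hc]
    field_simp
    ring
  rw [tendsto_congr' hEq]
  have h0 : Tendsto
      (fun r : ℝ => (1 / 4 + (1 / (2 * π)) * arcsin (r ^ 2 / (r ^ 2 + 2 * n₀))) / r)
      atTop (nhds 0) := by
    apply Tendsto.div_atTop (l := atTop)
      (a := 1 / 4 + (1 / (2 * π)) * arcsin 1) ?_ tendsto_id
    refine tendsto_const_nhds.add (Tendsto.const_mul _ ?_)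
    exact (Real.continuous_arcsin.continuousAt.tendsto).comp
      (aux_ratio_tendsto (2 * n₀) (by positivity))
  have h1 : Tendsto (fun r : ℝ => c * Real.sqrt (r ^ 2 / (r ^ 2 + n₀))) atTop
      (nhds (c * Real.sqrt 1)) := by
    refine Tendsto.const_mul _ ?_
    exact (Real.continuous_sqrt.continuousAt.tendsto).comp (aux_ratio_tendsto n₀ hn₀)
  have := h0.add h1
  rw [Real.sqrt_one, mul_one, zero_add] at this
  exact this
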